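/- arXiv:1112.3800 — 4 statements merged into one kernel-verified Lean document; each statement's English description precedes it below -/
import Mathlib

section
/- Let n, k be natural numbers and let f : ℝⁿ → ℝ be a k-regulous function. Then the zero set Z(f) = {x ∈ ℝⁿ : f(x) = 0} is Zariski constructible: there exist finitely many pairs of real polynomials (p₁, q₁), …, (p_m, q_m) in n variables such that Z(f) = ⋃ᵢ ({x : pᵢ(x) = 0} \ {x : qᵢ(x) = 0}). -/
set_option maxRecDepth 4000

open MvPolynomial

noncomputable section RegAux

namespace RegAux

variable {n : ℕ}

/-- substitution `X i ↦ X i + v i * t`, producing a polynomial in `t` with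
multivariate polynomial coefficients. -/
def lm (v : Fin n → ℝ) : MvPolynomial (Fin n) ℝ →ₐ[ℝ] Polynomial (MvPolynomial (Fin n) ℝ) :=
  aeval fun i => Polynomial.C (X i) + Polynomial.C (C (v i)) * Polynomial.X

lemma eval_lm (v x : Fin n → ℝ) (t : ℝ) (r : MvPolynomial (Fin n) ℝ) :
    Polynomial.eval t (Polynomial.map (eval x) (lm v r)) = eval (x + t • v) r := by
  induction r using MvPolynomial.induction_on with
  | C a => simp [lm]
  | add p q hp hq => simp [map_add, hp, hq]
  | mul_X p i hp =>
    rw [map_mul, Polynomial.map_mul, Polynomial.eval_mul, hp, map_mul]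
    congr 1
    have hX : lm v (X i) = Polynomial.C (X i) + Polynomial.C (C (v i)) * Polynomial.X :=
      aeval_X _ i
    rw [hX]
    simp only [Polynomial.map_add, Polynomial.map_mul, Polynomial.map_C, Polynomial.map_X,
      Polynomial.eval_add, Polynomial.eval_mul, Polynomial.eval_C, Polynomial.eval_X,
      eval_X, eval_C, Pi.add_apply, Pi.smul_apply, smul_eq_mul]
    ring

lemma natDegree_L_le (v : Fin n → ℝ) (i : Fin n) :
    (Polynomial.C (X i) + Polynomial.C (C (v i)) * Polynomial.X :
      Polynomial (MvPolynomial (Fin n) ℝ)).natDegree ≤ 1 := by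
  refine (Polynomial.natDegree_add_le _ _).trans ?_
  simp only [Polynomial.natDegree_C, max_le_iff]
  exact ⟨Nat.zero_le _, (Polynomial.natDegree_C_mul_le _ _).trans (by simp)⟩

lemma coeff_L_one (v : Fin n → ℝ) (i : Fin n) :
    (Polynomial.C (X i) + Polynomial.C (C (v i)) * Polynomial.X :
      Polynomial (MvPolynomial (Fin n) ℝ)).coeff 1 = C (v i) := by
  simp [Polynomial.coeff_C]

lemma coeff_prod' {R : Type*} [CommRing R] {ι : Type*} (s : Finset ι)
    (f : ι → Polynomial R) (m : ι → ℕ) (h : ∀ i ∈ s, (f i).natDegree ≤ m i) :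
    (∏ i ∈ s, f i).coeff (∑ i ∈ s, m i) = ∏ i ∈ s, (f i).coeff (m i) := by
  classical
  induction s using Finset.cons_induction with
  | empty => simp
  | cons a s ha ih =>
    rw [Finset.prod_cons, Finset.sum_cons, Polynomial.coeff_mul_add_eq_of_natDegree_le
      (h a (Finset.mem_cons_self a s))
      ((Polynomial.natDegree_prod_le _ _).trans (Finset.sum_le_sum fun i hi =>
        h i (Finset.mem_cons_of_mem hi))),
      ih fun i hi => h i (Finset.mem_cons_of_mem hi), Finset.prod_cons]

lemma lm_monomial (v : Fin n → ℝ) (α : Fin n →₀ ℕ) (c : ℝ) :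
    lm v (monomial α c) = Polynomial.C (C c) * ∏ i ∈ α.support,
      (Polynomial.C (X i) + Polynomial.C (C (v i)) * Polynomial.X) ^ α i := by
  rw [monomial_eq, map_mul]
  congr 1
  · simp [lm, algebraMap_eq, Polynomial.algebraMap_apply]
  · rw [Finsupp.prod, map_prod]
    exact Finset.prod_congr rfl fun i _ => by simp [lm]

lemma natDegree_lm_monomial_le (v : Fin n → ℝ) (α : Fin n →₀ ℕ) (c : ℝ) :
    (lm v (monomial α c)).natDegree ≤ α.degree := by
  rw [lm_monomial]
  refine (Polynomial.natDegree_mul_le).trans ?_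
  simp only [Polynomial.natDegree_C, zero_add]
  refine (Polynomial.natDegree_prod_le _ _).trans ?_
  rw [show α.degree = ∑ i ∈ α.support, α i from rfl]
  refine Finset.sum_le_sum fun i _ => ?_
  exact (Polynomial.natDegree_pow_le).trans
    (by simpa using Nat.mul_le_mul_left (α i) (natDegree_L_le v i))

lemma coeff_lm_monomial (v : Fin n → ℝ) (α : Fin n →₀ ℕ) (c : ℝ) :
    (lm v (monomial α c)).coeff α.degree = C (eval v (monomial α c)) := by
  rw [lm_monomial, Polynomial.coeff_C_mul, Finsupp.degree_apply,
    coeff_prod' _ _ _ (fun i _ => (Polynomial.natDegree_pow_le).trans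
      (by simpa using Nat.mul_le_mul_left (α i) (natDegree_L_le v i)))]
  have : ∀ i ∈ α.support,
      ((Polynomial.C (X i) + Polynomial.C (C (v i)) * Polynomial.X :
        Polynomial (MvPolynomial (Fin n) ℝ)) ^ α i).coeff (α i)
        = C (v i ^ α i) := by
    intro i _
    have := Polynomial.coeff_pow_of_natDegree_le (natDegree_L_le v i) (m := α i)
    rw [mul_one] at this
    rw [this, coeff_L_one, ← map_pow]
  rw [Finset.prod_congr rfl this, ← map_prod, eval_monomial, ← map_mul, Finsupp.prod]

lemma coeff_lm_totalDegree (v : Fin n → ℝ) (q : MvPolynomial (Fin n) ℝ) :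
    (lm v q).coeff q.totalDegree = C (eval v (homogeneousComponent q.totalDegree q)) := by
  classical
  set d := q.totalDegree with hd
  conv_lhs => rw [q.as_sum]
  rw [map_sum, Polynomial.finset_sum_coeff, homogeneousComponent_apply, map_sum, map_sum,
    Finset.sum_filter]
  refine Finset.sum_congr rfl fun α hα => ?_
  by_cases hdeg : α.degree = d
  · rw [if_pos hdeg, ← hdeg, coeff_lm_monomial]
  · rw [if_neg hdeg]
    have hlt : α.degree < d :=
      lt_of_le_of_ne (by simpa [Finsupp.degree_apply, Finsupp.sum] using le_totalDegree hα) hdeg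
    exact Polynomial.coeff_eq_zero_of_natDegree_lt
      (lt_of_le_of_lt (natDegree_lm_monomial_le v α _) hlt)

lemma homogeneousComponent_totalDegree_ne_zero {q : MvPolynomial (Fin n) ℝ} (hq : q ≠ 0) :
    homogeneousComponent q.totalDegree q ≠ 0 := by
  classical
  obtain ⟨α, hα, hsum⟩ := Finset.exists_mem_eq_sup q.support
    (support_nonempty.mpr hq) fun s => s.sum fun _ e => e
  have hdeg : α.degree = q.totalDegree := by
    rw [totalDegree, hsum]; rfl
  intro h0
  have := coeff_homogeneousComponent (φ := q) q.totalDegree α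
  rw [h0, if_pos hdeg] at this
  exact (mem_support_iff.mp hα) this.symm

lemma exists_good_v {q : MvPolynomial (Fin n) ℝ} (hq : q ≠ 0) :
    ∃ v : Fin n → ℝ, eval v (homogeneousComponent q.totalDegree q) ≠ 0 := by
  by_contra h
  push_neg at h
  exact homogeneousComponent_totalDegree_ne_zero hq
    (MvPolynomial.funext fun x => by simpa using h x)

end RegAux

end RegAux

namespace RegAux

lemma key1d (A B : Polynomial ℝ) (F : ℝ → ℝ) (hF : Continuous F)
    (hrel : ∀ t, B.eval t * F t = A.eval t)
    (a : ℕ) (g : Polynomial ℝ) (hB : B = Polynomial.X ^ a * g) (hg : g.eval 0 ≠ 0) :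
    (F 0 = 0 ↔ A.coeff a = 0) := by
  obtain ⟨h', hA'⟩ : Polynomial.X ^ a ∣ A := by
    rcases eq_or_ne A 0 with h0 | h0
    · exact h0 ▸ dvd_zero _
    obtain ⟨h, hA, hnd⟩ := A.exists_eq_pow_rootMultiplicity_mul_and_not_dvd h0 0
    rw [map_zero, sub_zero] at hA hnd
    have hh0 : h.eval 0 ≠ 0 := by
      rw [← Polynomial.coeff_zero_eq_eval_zero]
      exact fun hc => hnd (Polynomial.X_dvd_iff.mpr hc)
    set b := Polynomial.rootMultiplicity 0 A with hb
    have hab : a ≤ b := by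
      by_contra hba
      push_neg at hba
      have hev : ∀ᶠ t in nhdsWithin (0:ℝ) {0}ᶜ,
          h.eval t = t ^ (a - b) * (g.eval t * F t) := by
        filter_upwards [self_mem_nhdsWithin] with t ht
        have ht0 : (t:ℝ) ≠ 0 := ht
        have h1 := hrel t
        rw [hB, hA] at h1
        simp only [Polynomial.eval_mul, Polynomial.eval_pow, Polynomial.eval_X] at h1
        have hta : t ^ a = t ^ b * t ^ (a - b) := by
          rw [← pow_add]; congr 1; omega
        have key : t ^ b * (t ^ (a - b) * (g.eval t * F t)) = t ^ b * h.eval t := by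
          rw [← h1, hta]; ring
        exact (mul_left_cancel₀ (pow_ne_zero b ht0) key).symm
      have h1 : Filter.Tendsto (fun t : ℝ => h.eval t) (nhdsWithin 0 {0}ᶜ)
          (nhds (h.eval 0)) := (h.continuous.tendsto 0).mono_left nhdsWithin_le_nhds
      have h2 : Filter.Tendsto (fun t : ℝ => t ^ (a - b) * (g.eval t * F t))
          (nhdsWithin 0 {0}ᶜ) (nhds 0) := by
        have h3 : Filter.Tendsto (fun t : ℝ => t ^ (a - b) * (g.eval t * F t)) (nhds 0)
            (nhds ((0:ℝ) ^ (a - b) * (g.eval 0 * F 0))) :=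
          ((continuous_pow _).mul (g.continuous.mul hF)).tendsto 0
        rw [zero_pow (by omega), zero_mul] at h3
        exact h3.mono_left nhdsWithin_le_nhds
      exact hh0 (tendsto_nhds_unique (h1.congr' hev) h2)
    exact hA ▸ (pow_dvd_pow Polynomial.X hab).mul_right h
  have hg0F : g.eval 0 * F 0 = h'.eval 0 := by
    have hev : ∀ᶠ t in nhdsWithin (0:ℝ) {0}ᶜ, g.eval t * F t = h'.eval t := by
      filter_upwards [self_mem_nhdsWithin] with t ht
      have ht0 : (t:ℝ) ≠ 0 := ht
      have h1 := hrel t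
      rw [hB, hA'] at h1
      simp only [Polynomial.eval_mul, Polynomial.eval_pow, Polynomial.eval_X] at h1
      have key : t ^ a * (g.eval t * F t) = t ^ a * h'.eval t := by rw [← h1]; ring
      exact mul_left_cancel₀ (pow_ne_zero a ht0) key
    have t1 : Filter.Tendsto (fun t : ℝ => g.eval t * F t) (nhdsWithin 0 {0}ᶜ)
        (nhds (g.eval 0 * F 0)) :=
      ((g.continuous.mul hF).tendsto 0).mono_left nhdsWithin_le_nhds
    have t2 : Filter.Tendsto (fun t : ℝ => h'.eval t) (nhdsWithin 0 {0}ᶜ)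
        (nhds (h'.eval 0)) := (h'.continuous.tendsto 0).mono_left nhdsWithin_le_nhds
    exact tendsto_nhds_unique (t1.congr' hev) t2
  have hcoeff : A.coeff a = h'.eval 0 := by
    rw [hA', ← Polynomial.coeff_zero_eq_eval_zero]
    simpa using Polynomial.coeff_X_pow_mul h' a 0
  constructor
  · intro h0; rw [hcoeff, ← hg0F, h0, mul_zero]
  · intro h0
    rw [hcoeff] at h0
    rcases mul_eq_zero.mp (hg0F.trans h0) with h | h
    · exact absurd h hg
    · exact h

end RegAux

/-- A function `f : ℝⁿ → ℝ` is `k`-regulous if it is of class `C^k` on all of `ℝⁿ` and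
agrees with a rational function: there are polynomials `p`, `q` with `q ≠ 0` and
`q(x) * f(x) = p(x)` for every `x`. -/
def IsRegulous (n k : ℕ) (f : (Fin n → ℝ) → ℝ) : Prop :=
  ContDiff ℝ k f ∧ ∃ p q : MvPolynomial (Fin n) ℝ, q ≠ 0 ∧
    ∀ x : Fin n → ℝ, eval x q * f x = eval x p

/-- **Regulous functions, Corollaire `coregfermeestconstructible`**: the zero set of a
`k`-regulous function on `ℝⁿ` is Zariski constructible, i.e. a finite union of differences
of real polynomial zero sets. -/
theorem zero_set_regulous_constructible (n k : ℕ) (f : (Fin n → ℝ) → ℝ)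
    (hf : IsRegulous n k f) :
    ∃ (m : ℕ) (p q : Fin m → MvPolynomial (Fin n) ℝ),
      {x : Fin n → ℝ | f x = 0} =
        ⋃ i : Fin m, ({x : Fin n → ℝ | eval x (p i) = 0} \ {x : Fin n → ℝ | eval x (q i) = 0}) := by
  obtain ⟨hCf, P, Q, hQ, hrel⟩ := hf
  obtain ⟨v, hv⟩ := RegAux.exists_good_v hQ
  have hcoef : (RegAux.lm v Q).coeff Q.totalDegree
      = C (eval v (homogeneousComponent Q.totalDegree Q)) := RegAux.coeff_lm_totalDegree v Q
  set D := (RegAux.lm v Q).natDegree with hD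
  refine ⟨D + 1,
    fun i => (∑ j ∈ Finset.range (i : ℕ), ((RegAux.lm v Q).coeff j) ^ 2)
      + ((RegAux.lm v P).coeff (i : ℕ)) ^ 2,
    fun i => (RegAux.lm v Q).coeff (i : ℕ), ?_⟩
  ext x
  simp only [Set.mem_setOf_eq, Set.mem_iUnion, Set.mem_diff]
  set B := (RegAux.lm v Q).map (eval x) with hBdef
  set A := (RegAux.lm v P).map (eval x) with hAdef
  have hBc : ∀ j, B.coeff j = eval x ((RegAux.lm v Q).coeff j) :=
    fun j => Polynomial.coeff_map _ _
  have hAc : ∀ j, A.coeff j = eval x ((RegAux.lm v P).coeff j) :=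
    fun j => Polynomial.coeff_map _ _
  have hBne : B ≠ 0 := by
    intro h0
    have hb : B.coeff Q.totalDegree = eval v (homogeneousComponent Q.totalDegree Q) := by
      rw [hBc, hcoef]; simp
    rw [h0] at hb
    simp only [Polynomial.coeff_zero] at hb
    exact hv hb.symm
  set a := Polynomial.rootMultiplicity 0 B with ha
  obtain ⟨g, hBg, hnd⟩ := B.exists_eq_pow_rootMultiplicity_mul_and_not_dvd hBne 0
  rw [map_zero, sub_zero] at hBg hnd
  have hg0 : g.eval 0 ≠ 0 := by
    rw [← Polynomial.coeff_zero_eq_eval_zero]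
    exact fun hc' => hnd (Polynomial.X_dvd_iff.mpr hc')
  have haD : a ≤ D := by
    have h1 : (Polynomial.X ^ a : Polynomial ℝ).natDegree ≤ B.natDegree :=
      Polynomial.natDegree_le_of_dvd ⟨g, hBg⟩ hBne
    simpa [Polynomial.natDegree_X_pow] using h1.trans Polynomial.natDegree_map_le
  have hline : ∀ t : ℝ, B.eval t * f (x + t • v) = A.eval t := by
    intro t
    rw [hBdef, hAdef, RegAux.eval_lm, RegAux.eval_lm]
    exact hrel _
  have hFcont : Continuous fun t : ℝ => f (x + t • v) :=
    hCf.continuous.comp (continuous_const.add (continuous_id.smul continuous_const))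
  have hkey : f x = 0 ↔ A.coeff a = 0 := by
    have h1 := RegAux.key1d A B (fun t => f (x + t • v)) hFcont hline a g hBg hg0
    simpa using h1
  have hBlt : ∀ j < a, B.coeff j = 0 := by
    intro j hj
    rw [hBg, Polynomial.coeff_X_pow_mul', if_neg (by omega)]
  have hBa : B.coeff a ≠ 0 := by
    rw [hBg, Polynomial.coeff_X_pow_mul', if_pos le_rfl, Nat.sub_self,
      Polynomial.coeff_zero_eq_eval_zero]
    exact hg0
  have hevalsum : ∀ i : ℕ,
      eval x ((∑ j ∈ Finset.range i, ((RegAux.lm v Q).coeff j) ^ 2)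
        + ((RegAux.lm v P).coeff i) ^ 2)
      = (∑ j ∈ Finset.range i, (B.coeff j) ^ 2) + (A.coeff i) ^ 2 := by
    intro i
    rw [map_add, map_sum, map_pow]
    simp only [map_pow, ← hBc, ← hAc]
  have hsq : ∀ i : ℕ,
      ((∑ j ∈ Finset.range i, (B.coeff j) ^ 2) + (A.coeff i) ^ 2 = 0)
      ↔ (∀ j < i, B.coeff j = 0) ∧ A.coeff i = 0 := by
    intro i
    rw [add_eq_zero_iff_of_nonneg (Finset.sum_nonneg fun j _ => sq_nonneg _) (sq_nonneg _),
      Finset.sum_eq_zero_iff_of_nonneg fun j _ => sq_nonneg _]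
    simp [sq_eq_zero_iff, Finset.mem_range]
  constructor
  · intro hfx
    refine ⟨⟨a, by omega⟩, ?_, ?_⟩
    · rw [hevalsum, hsq]
      exact ⟨hBlt, hkey.mp hfx⟩
    · show ¬ eval x ((RegAux.lm v Q).coeff a) = 0
      rw [← hBc]
      exact hBa
  · rintro ⟨i, h1, h2⟩
    rw [hevalsum, hsq] at h1
    have hB2 : B.coeff (i : ℕ) ≠ 0 := by rw [hBc]; exact h2
    have hia : (i : ℕ) = a := by
      rcases lt_trichotomy (i : ℕ) a with h | h | h
      · exact absurd (hBlt _ h) hB2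
      · exact h
      · exact absurd (h1.1 a h) hBa
    exact hkey.mpr (hia ▸ h1.2)
end

section
/- Let ℓ, m, n, k be natural numbers. Let f : ℝⁿ → ℝᵐ be a map each of whose m coordinate functions is k-regulous, and let g : ℝᵐ → ℝˡ be a map each of whose ℓ coordinate functions is k-regulous. Then each coordinate function of the composition g ∘ f : ℝⁿ → ℝˡ is k-regulous. -/
open MvPolynomial

open Polynomial Filter Topology in
/-- If `Q(t) * g(t) = P(t)` for all `t`, with `g` continuous at `0` and the coefficients of `Q`
below degree `a` all zero, then `Q.coeff a * g 0 = P.coeff a`. -/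
lemma key_one_var : ∀ (a : ℕ) (P Q : Polynomial ℝ) (g : ℝ → ℝ),
    ContinuousAt g 0 → (∀ t, Q.eval t * g t = P.eval t) →
    (∀ j, j < a → Q.coeff j = 0) → Q.coeff a * g 0 = P.coeff a := by
  intro a
  induction a with
  | zero =>
    intro P Q g _ h _
    rw [coeff_zero_eq_eval_zero, coeff_zero_eq_eval_zero]
    exact h 0
  | succ a ih =>
    intro P Q g hg h hlow
    have hQ0 : Q.coeff 0 = 0 := hlow 0 (Nat.succ_pos a)
    have hP0 : P.coeff 0 = 0 := by
      have := h 0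
      rw [← coeff_zero_eq_eval_zero, ← coeff_zero_eq_eval_zero, hQ0, zero_mul] at this
      exact this.symm
    have hQ : ∀ t : ℝ, Q.eval t = Q.divX.eval t * t := by
      intro t
      conv_lhs => rw [← divX_mul_X_add Q]
      simp [hQ0]
    have hP : ∀ t : ℝ, P.eval t = P.divX.eval t * t := by
      intro t
      conv_lhs => rw [← divX_mul_X_add P]
      simp [hP0]
    have hne : ∀ t : ℝ, t ≠ 0 → Q.divX.eval t * g t = P.divX.eval t := by
      intro t ht
      have := h t
      rw [hQ, hP] at this
      have : (Q.divX.eval t * g t) * t = P.divX.eval t * t := by ring_nf; ring_nf at this; linarith [this]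
      exact mul_right_cancel₀ ht this
    have hrel : ∀ t : ℝ, Q.divX.eval t * g t = P.divX.eval t := by
      intro t
      rcases eq_or_ne t 0 with rfl | ht
      · have l1 : Tendsto (fun s : ℝ => Q.divX.eval s * g s) (𝓝[≠] (0:ℝ))
            (𝓝 (Q.divX.eval 0 * g 0)) :=
          ((Q.divX.continuous.continuousAt.mul hg).tendsto).mono_left nhdsWithin_le_nhds
        have l2 : Tendsto (fun s : ℝ => P.divX.eval s) (𝓝[≠] (0:ℝ)) (𝓝 (P.divX.eval 0)) :=
          (P.divX.continuous.continuousAt.tendsto).mono_left nhdsWithin_le_nhds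
        have heq : (fun s : ℝ => Q.divX.eval s * g s) =ᶠ[𝓝[≠] (0:ℝ)]
            fun s => P.divX.eval s :=
          eventually_mem_nhdsWithin.mono fun s hs => hne s hs
        exact tendsto_nhds_unique (l1.congr' heq) l2
      · exact hne t ht
    have := ih P.divX Q.divX g hg hrel
      (fun j hj => by rw [coeff_divX]; exact hlow (j + 1) (Nat.succ_lt_succ hj))
    rwa [coeff_divX, coeff_divX] at this

lemma exists_eval_ne {n : ℕ} (r : MvPolynomial (Fin n) ℝ) (h : r ≠ 0) :
    ∃ x : Fin n → ℝ, eval x r ≠ 0 := by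
  by_contra h'
  push_neg at h'
  exact h (MvPolynomial.funext fun x => by simp [h' x])

/-- Substitute `y j ↦ (pp j / qq j) + t * v j` into a polynomial in `m` variables,
clearing denominators by `(∏ qq)^D`. -/
noncomputable def Tsub {m n : ℕ} (pp qq : Fin m → MvPolynomial (Fin n) ℝ) (v : Fin m → ℝ)
    (D : ℕ) (r : MvPolynomial (Fin m) ℝ) : Polynomial (MvPolynomial (Fin n) ℝ) :=
  ∑ e ∈ r.support,
    Polynomial.C (MvPolynomial.C (MvPolynomial.coeff e r) *
        (∏ j, qq j) ^ (D - e.sum fun _ k => k)) *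
      ∏ j, (Polynomial.C (pp j * ∏ j' ∈ Finset.univ.erase j, qq j') +
            Polynomial.C (MvPolynomial.C (v j) * ∏ j', qq j') * Polynomial.X) ^ (e j)

lemma Tsub_eval {m n : ℕ} (f : (Fin n → ℝ) → (Fin m → ℝ))
    (pp qq : Fin m → MvPolynomial (Fin n) ℝ)
    (hpqf : ∀ j x, eval x (qq j) * f x j = eval x (pp j))
    (v : Fin m → ℝ) (D : ℕ) (r : MvPolynomial (Fin m) ℝ) (hr : r.totalDegree ≤ D)
    (x : Fin n → ℝ) (t : ℝ) :
    Polynomial.eval t (Polynomial.map (MvPolynomial.eval x) (Tsub pp qq v D r))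
      = (eval x (∏ j, qq j)) ^ D * eval (fun j => f x j + t * v j) r := by
  set Qx : ℝ := eval x (∏ j, qq j) with hQx
  have key : ∀ j : Fin m, eval x (pp j * ∏ j' ∈ Finset.univ.erase j, qq j') = f x j * Qx := by
    intro j
    rw [map_mul, ← hpqf j x, hQx, ← Finset.mul_prod_erase Finset.univ qq (Finset.mem_univ j)]
    simp only [map_mul, map_prod]
    ring
  have key2 : ∀ j : Fin m, eval x (MvPolynomial.C (v j) * ∏ j', qq j') = v j * Qx := by
    intro j
    rw [map_mul, eval_C, hQx]
  rw [Tsub, Polynomial.map_sum, Polynomial.eval_finset_sum, eval_eq', Finset.mul_sum]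
  refine Finset.sum_congr rfl fun e he => ?_
  have hsum : (e.sum fun _ k => k) = ∑ j, e j := Finsupp.sum_fintype _ _ fun _ => rfl
  have hle : (e.sum fun _ k => k) ≤ D := le_trans (le_totalDegree he) hr
  have hZ : ∀ j : Fin m, Polynomial.eval t (Polynomial.map (MvPolynomial.eval x)
      ((Polynomial.C (pp j * ∏ j' ∈ Finset.univ.erase j, qq j') +
        Polynomial.C (MvPolynomial.C (v j) * ∏ j', qq j') * Polynomial.X) ^ (e j)))
      = Qx ^ (e j) * (f x j + t * v j) ^ (e j) := by
    intro j
    rw [Polynomial.map_pow, Polynomial.eval_pow, ← mul_pow]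
    congr 1
    simp only [Polynomial.map_add, Polynomial.map_mul, Polynomial.map_C, Polynomial.map_X,
      Polynomial.eval_add, Polynomial.eval_mul, Polynomial.eval_C, Polynomial.eval_X,
      key, key2]
    ring
  rw [Polynomial.map_mul, Polynomial.map_C, Polynomial.eval_mul, Polynomial.eval_C,
    Polynomial.map_prod, Polynomial.eval_prod,
    Finset.prod_congr rfl fun j _ => hZ j,
    Finset.prod_mul_distrib, Finset.prod_pow_eq_pow_sum, map_mul, eval_C, map_pow, ← hQx, ← hsum]
  have hD : Qx ^ D = Qx ^ (D - e.sum fun _ k => k) * Qx ^ (e.sum fun _ k => k) := by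
    rw [← pow_add, Nat.sub_add_cancel hle]
  rw [hD]; ring


/-- **Regulous functions, Corollaire `cor.compositionregulues`**: the composition of two
`k`-regulous maps (maps all of whose coordinate functions are `k`-regulous) is again
`k`-regulous. -/
theorem comp_regulous (l m n k : ℕ)
    (f : (Fin n → ℝ) → (Fin m → ℝ)) (g : (Fin m → ℝ) → (Fin l → ℝ))
    (hf : ∀ j : Fin m, IsRegulous n k (fun x => f x j))
    (hg : ∀ i : Fin l, IsRegulous m k (fun y => g y i)) :
    ∀ i : Fin l, IsRegulous n k (fun x => g (f x) i) := by
  intro i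
  obtain ⟨hgc, p, q, hq, hpq⟩ := hg i
  have hfc : ∀ j, ContDiff ℝ k fun x => f x j := fun j => (hf j).1
  choose pp qq hqq hpqf using fun j => (hf j).2
  have hQall : (∏ j, qq j) ≠ 0 := Finset.prod_ne_zero_iff.mpr fun j _ => hqq j
  obtain ⟨x₀, hx₀⟩ := exists_eval_ne _ hQall
  obtain ⟨w, hw⟩ := exists_eval_ne _ hq
  set v : Fin m → ℝ := fun j => w j - f x₀ j with hv
  set D : ℕ := max q.totalDegree p.totalDegree with hD
  have hcont : ContDiff ℝ (k : ℕ∞) fun x => g (f x) i := hgc.comp (contDiff_pi.mpr hfc)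
  have hTq : Tsub pp qq v D q ≠ 0 := by
    intro h0
    have hev := Tsub_eval f pp qq hpqf v D q (le_max_left _ _) x₀ 1
    rw [h0] at hev
    simp only [Polynomial.map_zero, Polynomial.eval_zero] at hev
    have harg : (fun j => f x₀ j + 1 * v j) = w := by funext j; simp [hv]
    rw [harg] at hev
    exact (mul_ne_zero (pow_ne_zero _ hx₀) hw) hev.symm
  set a := (Tsub pp qq v D q).natTrailingDegree with ha
  refine ⟨hcont, (Tsub pp qq v D p).coeff a, (Tsub pp qq v D q).coeff a, ?_, ?_⟩
  · exact fun h0 => hTq (Polynomial.trailingCoeff_eq_zero.mp h0)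
  · intro x
    have hcg : ContinuousAt (fun t : ℝ => g (fun j => f x j + t * v j) i) 0 := by
      exact (hgc.continuous.comp (continuous_pi fun j =>
        continuous_const.add (continuous_id.mul continuous_const))).continuousAt
    have hrel : ∀ t : ℝ,
        Polynomial.eval t (Polynomial.map (eval x) (Tsub pp qq v D q)) *
          (g (fun j => f x j + t * v j) i)
        = Polynomial.eval t (Polynomial.map (eval x) (Tsub pp qq v D p)) := by
      intro t
      rw [Tsub_eval f pp qq hpqf v D q (le_max_left _ _) x t,
          Tsub_eval f pp qq hpqf v D p (le_max_right _ _) x t, mul_assoc]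
      exact congrArg _ (hpq _)
    have hlow : ∀ j, j < a → (Polynomial.map (eval x) (Tsub pp qq v D q)).coeff j = 0 := by
      intro j hj
      rw [Polynomial.coeff_map, Polynomial.coeff_eq_zero_of_lt_natTrailingDegree hj, map_zero]
    have hkey := key_one_var a (Polynomial.map (eval x) (Tsub pp qq v D p))
      (Polynomial.map (eval x) (Tsub pp qq v D q)) _ hcg hrel hlow
    rw [Polynomial.coeff_map, Polynomial.coeff_map] at hkey
    have harg : (fun j => f x j + (0:ℝ) * v j) = f x := by funext j; ring
    rw [harg] at hkey
    exact hkey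
end

section
/- Let n, k be natural numbers and let I be a radical ideal of the ring R^k(ℝⁿ) of k-regulous functions on ℝⁿ. Then I is a real ideal: whenever f₁, …, f_m ∈ R^k(ℝⁿ) satisfy f₁² + ⋯ + f_m² ∈ I, one has f_i ∈ I for every i = 1, …, m. -/
open MvPolynomial

/-- The ring `R^k(ℝⁿ)` of `k`-regulous functions, as a subring of the ring of all
functions `ℝⁿ → ℝ` with pointwise operations. -/
def regulousRing (n k : ℕ) : Subring ((Fin n → ℝ) → ℝ) where
  carrier := {f | IsRegulous n k f}
  one_mem' := ⟨contDiff_const, 1, 1, one_ne_zero, by simp⟩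
  zero_mem' := ⟨contDiff_const, 0, 1, one_ne_zero, by simp⟩
  mul_mem' := by
    rintro f g ⟨hf, p₁, q₁, hq₁, h₁⟩ ⟨hg, p₂, q₂, hq₂, h₂⟩
    refine ⟨hf.mul hg, p₁ * p₂, q₁ * q₂, mul_ne_zero hq₁ hq₂, fun x => ?_⟩
    simp only [eval_mul, Pi.mul_apply]
    linear_combination (eval x q₂ * g x) * h₁ x + eval x p₁ * h₂ x
  add_mem' := by
    rintro f g ⟨hf, p₁, q₁, hq₁, h₁⟩ ⟨hg, p₂, q₂, hq₂, h₂⟩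
    refine ⟨hf.add hg, p₁ * q₂ + p₂ * q₁, q₁ * q₂, mul_ne_zero hq₁ hq₂, fun x => ?_⟩
    simp only [eval_mul, eval_add, Pi.add_apply]
    linear_combination (eval x q₂) * h₁ x + (eval x q₁) * h₂ x
  neg_mem' := by
    rintro f ⟨hf, p, q, hq, h⟩
    refine ⟨hf.neg, -p, q, hq, fun x => ?_⟩
    simp only [map_neg, Pi.neg_apply]
    linear_combination -(h x)


open MvPolynomial Asymptotics Filter Topology ContinuousLinearMap

/-- Norm bound for the basic quotient shape. -/
private lemma regulous_bound {E W : Type} [NormedAddCommGroup E]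
    [NormedAddCommGroup W] [NormedSpace ℝ W] (f s : E → ℝ)
    (hfs : ∀ x, f x ^ 2 ≤ s x) (g : E → W) (N b : ℕ) (h2b : 2*b ≤ N) (x : E) :
    ‖(if s x = 0 then (0:W) else (f x ^ N / s x ^ b) • g x)‖
      ≤ |f x| ^ (N - 2*b) * ‖g x‖ := by
  by_cases hx : s x = 0
  · simp only [hx, if_pos, norm_zero]
    positivity
  · have hs0 : 0 < s x := lt_of_le_of_ne (le_trans (sq_nonneg _) (hfs x)) (Ne.symm hx)
    rw [if_neg hx, norm_smul]
    have h1 : ‖f x ^ N / s x ^ b‖ ≤ |f x| ^ (N - 2*b) := by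
      rw [Real.norm_eq_abs, abs_div, abs_pow, abs_pow, abs_of_pos hs0,
        div_le_iff₀ (by positivity)]
      have h2 : |f x| ^ N = |f x| ^ (N - 2*b) * (f x ^ 2) ^ b := by
        rw [← sq_abs, ← pow_mul, ← pow_add]
        congr 1
        omega
      rw [h2]
      exact mul_le_mul_of_nonneg_left (pow_le_pow_left₀ (sq_nonneg _) (hfs x) b)
        (by positivity)
    have := norm_nonneg (g x)
    gcongr

set_option maxHeartbeats 1000000 in
private lemma regulous_div_contDiff (j : ℕ) :
    ∀ {E W : Type} [NormedAddCommGroup E] [NormedSpace ℝ E]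
      [NormedAddCommGroup W] [NormedSpace ℝ W] {k : ℕ} {f s : E → ℝ},
      ContDiff ℝ k f → ContDiff ℝ k s → (∀ x, f x ^ 2 ≤ s x) → j ≤ k →
      ∀ (g : E → W), ContDiff ℝ j g → ∀ N b : ℕ, 1 ≤ b → 2*b + 3*j + 1 ≤ N →
      ContDiff ℝ j fun x => if s x = 0 then 0 else (f x ^ N / s x ^ b) • g x := by
  induction j with
  | zero =>
    intro E W _ _ _ _ k f s hf hs hfs _ g hg N b hb hN
    have hgc : Continuous g := hg.continuous
    simp only [Nat.cast_zero, contDiff_zero]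
    rw [continuous_iff_continuousAt]
    intro x₀
    by_cases hx : s x₀ = 0
    · have hfx0 : f x₀ = 0 := by nlinarith [hfs x₀, sq_nonneg (f x₀), hx.le, hx.ge]
      have hF0 : (if s x₀ = 0 then (0:W) else (f x₀ ^ N / s x₀ ^ b) • g x₀) = 0 := if_pos hx
      rw [ContinuousAt, hF0]
      rw [tendsto_zero_iff_norm_tendsto_zero]
      apply squeeze_zero (fun y => norm_nonneg _)
        (regulous_bound f s hfs g N b (by omega))
      have htend : Tendsto (fun y => |f y| ^ (N - 2*b) * ‖g y‖) (𝓝 x₀) _ := ((hf.continuous.abs.pow (N - 2*b)).mul hgc.norm).tendsto x₀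
      simpa [hfx0, zero_pow (show N - 2*b ≠ 0 by omega)] using htend
    · have hev : ∀ᶠ y in 𝓝 x₀, s y ≠ 0 := hs.continuous.continuousAt.eventually_ne hx
      have hca : ContinuousAt (fun y => (f y ^ N / s y ^ b) • g y) x₀ :=
        (((hf.continuous.pow N).continuousAt).div ((hs.continuous.pow b).continuousAt)
          (pow_ne_zero _ hx)).smul hgc.continuousAt
      exact hca.congr (by filter_upwards [hev] with y hy; rw [if_neg hy])
  | succ j ih =>
    intro E W _ _ _ _ k f s hf hs hfs hjk g hg N b hb hN
    obtain ⟨M, rfl⟩ : ∃ M, N = M + 1 := ⟨N - 1, by omega⟩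
    obtain ⟨b, rfl⟩ : ∃ b', b = b' + 1 := ⟨b - 1, by omega⟩
    have hk1 : (1 : WithTop ℕ∞) ≤ (k : WithTop ℕ∞) := by
      exact_mod_cast (by omega : (1:ℕ) ≤ k)
    have hfd : Differentiable ℝ f := hf.differentiable (by exact_mod_cast (show k ≠ 0 by omega))
    have hsd : Differentiable ℝ s := hs.differentiable (by exact_mod_cast (show k ≠ 0 by omega))
    have hgd : Differentiable ℝ g :=
      hg.differentiable (by simp)
    have hjk' : (↑j + 1 : WithTop ℕ∞) ≤ (k : WithTop ℕ∞) := by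
      exact_mod_cast (by exact_mod_cast hjk : ((j+1 : ℕ) : WithTop ℕ∞) ≤ k)
    have hf' : ContDiff ℝ j (fderiv ℝ f) := hf.fderiv_right hjk'
    have hs' : ContDiff ℝ j (fderiv ℝ s) := hs.fderiv_right hjk'
    have hg' : ContDiff ℝ j (fderiv ℝ g) :=
      hg.fderiv_right (by exact_mod_cast le_refl (j+1 : ℕ))
    have hfj : ContDiff ℝ j f := hf.of_le (by exact_mod_cast (by omega : j ≤ k))
    have hsj : ContDiff ℝ j s := hs.of_le (by exact_mod_cast (by omega : j ≤ k))
    have hgj : ContDiff ℝ j g := hg.of_le (by exact_mod_cast (by omega : j ≤ j+1))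
    have hsR1 : ContDiff ℝ j fun x => (fderiv ℝ f x).smulRight (g x) :=
      isBoundedBilinearMap_smulRight.contDiff.comp₂ hf' hgj
    have hsR2 : ContDiff ℝ j fun x => (fderiv ℝ s x).smulRight (g x) :=
      isBoundedBilinearMap_smulRight.contDiff.comp₂ hs' hgj
    have hH : ContDiff ℝ j fun x =>
        (f x * s x) • fderiv ℝ g x + (((M:ℝ) + 1) * s x) • ((fderiv ℝ f x).smulRight (g x))
          - (((b:ℝ) + 1) * f x) • ((fderiv ℝ s x).smulRight (g x)) := by
      apply ContDiff.sub
      · exact ((hfj.mul hsj).smul hg').add ((contDiff_const.mul hsj).smul hsR1)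
      · exact (contDiff_const.mul hfj).smul hsR2
    have hG := ih hf hs hfs (by omega) _ hH M (b+1+1) (by omega) (by omega)
    have hDeriv : ∀ x, HasFDerivAt
        (fun x => if s x = 0 then (0:W) else (f x ^ (M+1) / s x ^ (b+1)) • g x)
        (if s x = 0 then (0 : E →L[ℝ] W) else (f x ^ M / s x ^ (b+1+1)) •
          ((f x * s x) • fderiv ℝ g x
            + (((M:ℝ) + 1) * s x) • ((fderiv ℝ f x).smulRight (g x))
            - (((b:ℝ) + 1) * f x) • ((fderiv ℝ s x).smulRight (g x)))) x := by
      intro x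
      by_cases hx : s x = 0
      · rw [if_pos hx]
        have hfx0 : f x = 0 := by nlinarith [hfs x, sq_nonneg (f x), hx.le, hx.ge]
        have hO1 : (fun y => f y) =O[𝓝 x] fun y => y - x := by
          simpa [hfx0] using (hfd x).hasFDerivAt.isBigO_sub
        have hten : Tendsto f (𝓝 x) (𝓝 0) := hfx0 ▸ hf.continuous.continuousAt
        have ho1 : (fun y => f y) =o[𝓝 x] (fun _ => (1:ℝ)) := (isLittleO_one_iff ℝ).2 hten
        have h3 : (fun y => f y * f y) =o[𝓝 x] fun y => y - x := by
          have := hO1.norm_right.mul_isLittleO ho1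
          simp only [mul_one] at this
          exact this.trans_isBigO (isBigO_norm_left.mpr (isBigO_refl _ _))
        have h4 : (fun y => if s y = 0 then (0:W) else (f y ^ (M+1) / s y ^ (b+1)) • g y)
            =O[𝓝 x] fun y => f y * f y := by
          rw [isBigO_iff]
          refine ⟨‖g x‖ + 1, ?_⟩
          have hev1 : ∀ᶠ y in 𝓝 x, |f y| < 1 :=
            (show Tendsto (fun y => |f y|) (𝓝 x) (𝓝 0) by simpa using hten.abs)
              |>.eventually_lt_const one_pos
          have hev2 : ∀ᶠ y in 𝓝 x, ‖g y‖ < ‖g x‖ + 1 :=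
            (hg.continuous.norm.continuousAt (x := x)).eventually_lt_const (lt_add_one _)
          filter_upwards [hev1, hev2] with y h1 h2
          have hb1 := regulous_bound f s hfs g (M+1) (b+1) (by omega) y
          have he2 : |f y| ^ (M + 1 - 2*(b+1)) ≤ |f y| ^ 2 :=
            pow_le_pow_of_le_one (abs_nonneg _) h1.le (by omega)
          calc ‖(if s y = 0 then (0:W) else (f y ^ (M+1) / s y ^ (b+1)) • g y)‖
              ≤ |f y| ^ (M + 1 - 2*(b+1)) * ‖g y‖ := hb1
            _ ≤ |f y| ^ 2 * (‖g x‖ + 1) :=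
                mul_le_mul he2 h2.le (norm_nonneg _) (by positivity)
            _ = (‖g x‖ + 1) * ‖f y * f y‖ := by
                rw [Real.norm_eq_abs, abs_mul, sq]; ring
        have hfinal := h4.trans_isLittleO h3
        refine (hasFDerivAtFilter_iff_isLittleO ..).2 ?_
        simpa [hx, hfx0, Function.comp_def] using hfinal
      · rw [if_neg hx]
        have hsbx : s x ^ (b+1) ≠ 0 := pow_ne_zero _ hx
        have hev : ∀ᶠ y in 𝓝 x, s y ≠ 0 := hs.continuous.continuousAt.eventually_ne hx
        have hfx : HasFDerivAt f (fderiv ℝ f x) x := (hfd x).hasFDerivAt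
        have hsx : HasFDerivAt s (fderiv ℝ s x) x := (hsd x).hasFDerivAt
        have hgx : HasFDerivAt g (fderiv ℝ g x) x := (hgd x).hasFDerivAt
        have h1 : HasFDerivAt (fun y => f y ^ (M+1))
            ((((M:ℝ)+1) * f x ^ M) • fderiv ℝ f x) x := by
          have := (hasDerivAt_pow (M+1) (f x)).comp_hasFDerivAt x hfx
          simpa [Function.comp_def] using this
        have h2 : HasFDerivAt (fun y => s y ^ (b+1))
            ((((b:ℝ)+1) * s x ^ b) • fderiv ℝ s x) x := by
          have := (hasDerivAt_pow (b+1) (s x)).comp_hasFDerivAt x hsx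
          simpa [Function.comp_def] using this
        have h3 : HasFDerivAt (fun y => (s y ^ (b+1))⁻¹)
            ((-((s x ^ (b+1)) ^ 2)⁻¹) • ((((b:ℝ)+1) * s x ^ b) • fderiv ℝ s x)) x := by
          have := (hasDerivAt_inv hsbx).comp_hasFDerivAt x h2
          simpa [Function.comp_def] using this
        have h4 : HasFDerivAt (fun y => f y ^ (M+1) * (s y ^ (b+1))⁻¹)
            (f x ^ (M+1) •
                ((-((s x ^ (b+1)) ^ 2)⁻¹) • ((((b:ℝ)+1) * s x ^ b) • fderiv ℝ s x))
              + (s x ^ (b+1))⁻¹ • ((((M:ℝ)+1) * f x ^ M) • fderiv ℝ f x)) x := h1.mul h3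
        have h5 := h4.smul hgx
        have hFeq : (fun y => (f y ^ (M+1) * (s y ^ (b+1))⁻¹) • g y) =ᶠ[𝓝 x]
            (fun y => if s y = 0 then (0:W) else (f y ^ (M+1) / s y ^ (b+1)) • g y) := by
          filter_upwards [hev] with y hy
          rw [if_neg hy, div_eq_mul_inv]
        have h6 := h5.congr_of_eventuallyEq hFeq.symm
        convert h6 using 1
        refine ContinuousLinearMap.ext fun v => ?_
        simp only [smul_apply, add_apply, sub_apply, smulRight_apply,
          ContinuousLinearMap.coe_smul', Pi.smul_apply, neg_smul, smul_neg, smul_smul]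
        match_scalars <;> simp only [smul_eq_mul, mul_one] <;> field_simp <;> ring
    have hdiffF : Differentiable ℝ
        (fun x => if s x = 0 then (0:W) else (f x ^ (M+1) / s x ^ (b+1)) • g x) :=
      fun x => (hDeriv x).differentiableAt
    have hfderivF : (fderiv ℝ
        fun x => if s x = 0 then (0:W) else (f x ^ (M+1) / s x ^ (b+1)) • g x) =
        fun x => if s x = 0 then (0 : E →L[ℝ] W) else (f x ^ M / s x ^ (b+1+1)) •
          ((f x * s x) • fderiv ℝ g x
            + (((M:ℝ) + 1) * s x) • ((fderiv ℝ f x).smulRight (g x))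
            - (((b:ℝ) + 1) * f x) • ((fderiv ℝ s x).smulRight (g x))) :=
      funext fun x => (hDeriv x).fderiv
    have hcast : ((j+1 : ℕ) : WithTop ℕ∞) = (j : WithTop ℕ∞) + 1 := by push_cast; ring
    rw [hcast]
    refine contDiff_succ_iff_fderiv.2 ⟨hdiffF, ?_, ?_⟩
    · intro h
      exact absurd h (by simp)
    · rw [hfderivF]
      exact hG


open MvPolynomial Filter Topology

private lemma eval_line {n : ℕ} (x y : Fin n → ℝ) (q : MvPolynomial (Fin n) ℝ) (t : ℝ) :
    Polynomial.eval t (MvPolynomial.aeval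
        (fun i => Polynomial.C (x i) + Polynomial.C (y i - x i) * Polynomial.X) q) =
      eval (fun i => x i + t * (y i - x i)) q := by
  induction q using MvPolynomial.induction_on with
  | C a => simp
  | add p q hp hq => simp only [map_add, Polynomial.eval_add, eval_add, hp, hq]
  | mul_X p i hp =>
    simp only [map_mul, aeval_X, Polynomial.eval_mul, Polynomial.eval_add, Polynomial.eval_C,
      Polynomial.eval_X, hp, eval_mul, eval_X]
    ring

/-- If a nonzero polynomial times a continuous function vanishes identically,
the continuous function vanishes identically. -/
private lemma cont_zero_of_poly_mul_zero {n : ℕ} {q : MvPolynomial (Fin n) ℝ} (hq : q ≠ 0)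
    {s : (Fin n → ℝ) → ℝ} (hs : Continuous s)
    (h : ∀ x, eval x q * s x = 0) : ∀ x, s x = 0 := by
  intro x
  by_contra hx
  obtain ⟨y, hy⟩ : ∃ y, eval y q ≠ 0 := by
    by_contra hall
    push_neg at hall
    exact hq (MvPolynomial.funext fun z => by simp [hall z])
  set P : Polynomial ℝ :=
    MvPolynomial.aeval (fun i => Polynomial.C (x i) + Polynomial.C (y i - x i) * Polynomial.X) q
    with hP
  have hP1 : P.eval 1 = eval y q := by
    rw [hP, eval_line]
    have hyy : (fun i => x i + 1 * (y i - x i)) = y := funext fun i => by ring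
    rw [hyy]
  have hPne : P ≠ 0 := fun h0 => hy (by rw [← hP1, h0, Polynomial.eval_zero])
  -- the map t ↦ x + t (y - x) is continuous, so s is nonzero near t = 0
  have hz : Continuous fun t : ℝ => (fun i => x i + t * (y i - x i) : Fin n → ℝ) := by
    continuity
  have hs0 : (fun t : ℝ => s (fun i => x i + t * (y i - x i))) 0 ≠ 0 := by
    simpa using hx
  have hev : ∀ᶠ t in 𝓝 (0:ℝ), s (fun i => x i + t * (y i - x i)) ≠ 0 :=
    ((hs.comp hz).continuousAt).eventually_ne hs0
  obtain ⟨δ, hδ, hball⟩ := Metric.eventually_nhds_iff.1 hev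
  obtain ⟨t, ht, htroot⟩ :=
    (Set.Ioo_infinite (show (0:ℝ) < min δ 1 by positivity)).exists_notMem_finite
      (Polynomial.finite_setOf_isRoot hPne)
  have ht' : dist t (0:ℝ) < δ := by
    rw [Real.dist_eq, sub_zero, abs_of_pos ht.1]
    exact lt_of_lt_of_le ht.2 (min_le_left _ _)
  have hsz := hball ht'
  have hqz : eval (fun i => x i + t * (y i - x i)) q ≠ 0 := by
    rw [← eval_line x y q t]
    exact fun h0 => htroot h0
  exact hqz (by
    have := h (fun i => x i + t * (y i - x i))
    rcases mul_eq_zero.1 this with h' | h'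
    · exact h'
    · exact absurd h' hsz)

/-- **Regulous functions, Proposition `radreel`**: every radical ideal of the ring
`R^k(ℝⁿ)` of `k`-regulous functions is a real ideal: if a finite sum of squares
`f₁² + ⋯ + f_m²` belongs to `I`, then each `fᵢ` belongs to `I`. -/
theorem radical_ideal_is_real (n k : ℕ) (I : Ideal (regulousRing n k))
    (hI : I.radical = I)
    (m : ℕ) (f : Fin m → regulousRing n k)
    (hsum : (∑ i : Fin m, f i ^ 2) ∈ I) :
    ∀ i : Fin m, f i ∈ I := by
  intro i
  set S : regulousRing n k := ∑ j : Fin m, f j ^ 2 with hSdef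
  have hSval : ∀ x, (S : (Fin n → ℝ) → ℝ) x
      = ∑ j : Fin m, ((f j : (Fin n → ℝ) → ℝ) x)^2 := by
    intro x
    rw [hSdef]
    push_cast
    simp [Finset.sum_apply]
  set F : (Fin n → ℝ) → ℝ := ((f i : regulousRing n k) : (Fin n → ℝ) → ℝ) with hFdef
  have hfsle : ∀ x, (F x)^2 ≤ (S : (Fin n → ℝ) → ℝ) x := by
    intro x
    rw [hSval]
    exact Finset.single_le_sum (f := fun j => ((f j : (Fin n → ℝ) → ℝ) x)^2)
      (fun j _ => sq_nonneg _) (Finset.mem_univ i)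
  by_cases hz : ∀ x, (S : (Fin n → ℝ) → ℝ) x = 0
  · have hfiz : f i = 0 := by
      apply Subtype.ext
      funext x
      have h1 := hfsle x
      rw [hz x] at h1
      have : F x = 0 := by nlinarith [sq_nonneg (F x)]
      simpa [hFdef] using this
    rw [hfiz]
    exact I.zero_mem
  · push_neg at hz
    obtain ⟨x₀, hx₀⟩ := hz
    obtain ⟨hSsm, pS, qS, hqS, hSrat⟩ := S.2
    obtain ⟨hfsm, pf, qf, hqf, hfrat⟩ := (f i).2
    have hpS : pS ≠ 0 := by
      intro h0
      exact hx₀ (cont_zero_of_poly_mul_zero hqS hSsm.continuous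
        (fun x => by rw [hSrat x, h0, map_zero]) x₀)
    set N := 3*k+3 with hNdef
    set h : (Fin n → ℝ) → ℝ := fun x =>
      if (S : (Fin n → ℝ) → ℝ) x = 0 then 0
      else (F x ^ N / (S : (Fin n → ℝ) → ℝ) x ^ 1) • (1:ℝ) with hhdef
    have hsm : ContDiff ℝ k h :=
      regulous_div_contDiff k hfsm hSsm hfsle le_rfl (fun _ => (1:ℝ)) contDiff_const
        N 1 le_rfl (by omega)
    have hkey : ∀ x, (S : (Fin n → ℝ) → ℝ) x * h x = F x ^ N := by
      intro x
      by_cases hx : (S : (Fin n → ℝ) → ℝ) x = 0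
      · have hfx : F x = 0 := by nlinarith [hfsle x, sq_nonneg (F x), hx.le, hx.ge]
        simp [hhdef, hx, hfx, zero_pow (show N ≠ 0 by omega)]
      · simp only [hhdef, if_neg hx, smul_eq_mul, mul_one, pow_one]
        field_simp
    have hrat : ∀ x, eval x (pS * qf^N) * h x = eval x (qS * pf^N) := by
      intro x
      have e1 := hSrat x
      have e2 := hfrat x
      have e3 := hkey x
      simp only [eval_mul, map_pow]
      calc eval x pS * eval x qf ^ N * h x
          = eval x qS * ((S : (Fin n → ℝ) → ℝ) x * h x) * eval x qf ^ N := by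
            rw [← e1]; ring
        _ = eval x qS * (eval x qf * F x) ^ N := by rw [e3, mul_pow]; ring
        _ = eval x qS * eval x pf ^ N := by rw [e2]
    have hmem : h ∈ regulousRing n k :=
      ⟨hsm, qS * pf^N, pS * qf^N, mul_ne_zero hpS (pow_ne_zero _ hqf), hrat⟩
    have hpow : f i ^ N = (⟨h, hmem⟩ : regulousRing n k) * S := by
      apply Subtype.ext
      funext x
      push_cast
      simp only [Pi.pow_apply, Pi.mul_apply]
      rw [← hkey x]
      ring
    have h1 : f i ^ N ∈ I := by
      rw [hpow]
      exact I.mul_mem_left _ hsum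
    have h2 : f i ∈ I.radical := ⟨N, h1⟩
    rwa [hI] at h2
end

section
/- Let n ≥ 2 and k be natural numbers. Then the ring R^k(ℝⁿ) of k-regulous functions on ℝⁿ is not Noetherian; in particular there exists a strictly increasing sequence I₀ ⊊ I₁ ⊊ I₂ ⊊ … of ideals of R^k(ℝⁿ). -/
open MvPolynomial

set_option maxHeartbeats 1000000

namespace RegNoeth

open Filter Asymptotics

variable {n : ℕ}

/-- The basic rational model function `x^a y^b / (x² + y^{2q})^c` on `ℝⁿ`,
where `x, y` are the `i0`-th and `i1`-th coordinates. -/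
noncomputable def G (i0 i1 : Fin n) (q a b c : ℕ) : (Fin n → ℝ) → ℝ :=
  fun u => ((u i0) ^ a * (u i1) ^ b) / ((u i0) ^ 2 + (u i1) ^ (2 * q)) ^ c

lemma E_nonneg (x y : ℝ) (q : ℕ) : 0 ≤ x ^ 2 + y ^ (2 * q) := by
  have h2 : (0:ℝ) ≤ y ^ (2 * q) := by rw [pow_mul]; positivity
  nlinarith [sq_nonneg x]

lemma E_eq_zero {x y : ℝ} {q : ℕ} (hq : 1 ≤ q) (h : x ^ 2 + y ^ (2 * q) = 0) :
    x = 0 ∧ y = 0 := by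
  have h2 : (0:ℝ) ≤ y ^ (2 * q) := by rw [pow_mul]; positivity
  have hx : x ^ 2 = 0 := by nlinarith [sq_nonneg x]
  have hy : y ^ (2 * q) = 0 := by nlinarith [sq_nonneg x]
  constructor
  · exact pow_eq_zero_iff (n := 2) (by norm_num) |>.mp hx
  · exact pow_eq_zero_iff (n := 2 * q) (by omega) |>.mp hy

/-- Key estimate: `|G|^{2q} ≤ E^w` where `w = qa + b - 2qc` is the quasi-homogeneous weight. -/
lemma G_pow_le (i0 i1 : Fin n) (q a b c w : ℕ) (hq : 1 ≤ q) (hw : 1 ≤ w)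
    (hww : q * a + b = w + 2 * q * c) (u : Fin n → ℝ) :
    |G i0 i1 q a b c u| ^ (2 * q) ≤ ((u i0) ^ 2 + (u i1) ^ (2 * q)) ^ w := by
  set x := u i0 with hx
  set y := u i1 with hy
  have hE0 : 0 ≤ x ^ 2 + y ^ (2 * q) := E_nonneg x y q
  have hyq : (0:ℝ) ≤ y ^ (2 * q) := by rw [pow_mul]; positivity
  rcases eq_or_lt_of_le hE0 with h0 | hpos
  · -- E = 0 : both sides vanish
    obtain ⟨hx0, hy0⟩ := E_eq_zero hq h0.symm
    have hab : 1 ≤ a ∨ 1 ≤ b := by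
      rcases Nat.eq_zero_or_pos a with ha | ha
      · rcases Nat.eq_zero_or_pos b with hb | hb
        · subst ha; subst hb; simp at hww; omega
        · right; omega
      · left; omega
    have hnum : x ^ a * y ^ b = 0 := by
      rcases hab with h1 | h1
      · rw [hx0, zero_pow (by omega : a ≠ 0), zero_mul]
      · rw [hy0, zero_pow (by omega : b ≠ 0), mul_zero]
    have hG : G i0 i1 q a b c u = 0 := by
      simp only [G, ← hx, ← hy, hnum, zero_div]
    rw [hG, ← h0, abs_zero, zero_pow (by omega : 2 * q ≠ 0),
      zero_pow (by omega : w ≠ 0)]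
  · set E := x ^ 2 + y ^ (2 * q) with hE
    have hEc : (0:ℝ) < E ^ c := pow_pos hpos c
    have e1 : (|x| ^ a) ^ (2 * q) = (x ^ 2) ^ (q * a) := by
      rw [← pow_mul, show a * (2 * q) = 2 * (q * a) by ring, pow_mul, sq_abs]
    have e2 : (|y| ^ b) ^ (2 * q) = (y ^ (2 * q)) ^ b := by
      rw [← pow_mul, show b * (2 * q) = 2 * q * b by ring, pow_mul]
      congr 1
      rw [← abs_pow]
      exact abs_of_nonneg hyq
    have l1 : (x ^ 2) ^ (q * a) ≤ E ^ (q * a) := by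
      apply pow_le_pow_left₀ (sq_nonneg x)
      rw [hE]; nlinarith
    have l2 : (y ^ (2 * q)) ^ b ≤ E ^ b := by
      apply pow_le_pow_left₀ hyq
      rw [hE]; nlinarith [sq_nonneg x]
    have hnum : (|x| ^ a * |y| ^ b) ^ (2 * q) ≤ E ^ (q * a + b) := by
      calc (|x| ^ a * |y| ^ b) ^ (2 * q)
          = (|x| ^ a) ^ (2 * q) * (|y| ^ b) ^ (2 * q) := mul_pow _ _ _
        _ = (x ^ 2) ^ (q * a) * (y ^ (2 * q)) ^ b := by rw [e1, e2]
        _ ≤ E ^ (q * a) * E ^ b := mul_le_mul l1 l2 (by positivity) (by positivity)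
        _ = E ^ (q * a + b) := (pow_add _ _ _).symm
    have habs : |G i0 i1 q a b c u| = (|x| ^ a * |y| ^ b) / E ^ c := by
      simp only [G, ← hx, ← hy, ← hE]
      rw [abs_div, abs_mul, abs_pow, abs_pow, abs_of_nonneg (le_of_lt hEc)]
    rw [habs, div_pow, div_le_iff₀ (by positivity)]
    calc (|x| ^ a * |y| ^ b) ^ (2 * q) ≤ E ^ (q * a + b) := hnum
      _ = E ^ w * (E ^ c) ^ (2 * q) := by
          rw [← pow_mul, ← pow_add]
          rw [hww]; ring


/-- The derivative of `G` everywhere (including the singular locus). -/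
lemma G_hasFDerivAt (i0 i1 : Fin n) (q a b c : ℕ) (hq : 1 ≤ q) (hc : 1 ≤ c)
    (hw : q + 1 + 2 * q * c ≤ q * a + b) (u : Fin n → ℝ) :
    HasFDerivAt (G i0 i1 q a b c)
      (((a : ℝ) * G i0 i1 q (a - 1) b c u - (2 * c : ℝ) * G i0 i1 q (a + 1) b (c + 1) u) •
          ContinuousLinearMap.proj (R := ℝ) (φ := fun _ : Fin n => ℝ) i0
        + ((b : ℝ) * G i0 i1 q a (b - 1) c u -
            (2 * q * c : ℝ) * G i0 i1 q a (b + 2 * q - 1) (c + 1) u) •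
          ContinuousLinearMap.proj (R := ℝ) (φ := fun _ : Fin n => ℝ) i1) u := by
  by_cases hE : (u i0) ^ 2 + (u i1) ^ (2 * q) = 0
  · -- singular point: all coefficients vanish, and the derivative is 0
    obtain ⟨hx0, hy0⟩ := E_eq_zero hq hE
    have hzero : ∀ a' b' c' : ℕ, 1 ≤ c' → G i0 i1 q a' b' c' u = 0 := by
      intro a' b' c' hc'
      simp only [G, hE, zero_pow (by omega : c' ≠ 0), div_zero]
    rw [hzero _ _ _ hc, hzero _ _ _ (by omega), hzero _ _ _ hc, hzero _ _ _ (by omega)]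
    simp only [mul_zero, sub_zero, zero_smul, add_zero, zero_add, sub_self]
    -- now show HasFDerivAt G 0 u
    rw [hasFDerivAt_iff_isLittleO, isLittleO_iff]
    intro ε hε
    rw [Metric.eventually_nhds_iff]
    refine ⟨min (1/2) (ε ^ q / 2 ^ q), by positivity, fun u' hd => ?_⟩
    have hGu : G i0 i1 q a b c u = 0 := by
      simp only [G, hE, zero_pow (by omega : c ≠ 0), div_zero]
    rw [hGu]
    simp only [ContinuousLinearMap.zero_apply, sub_zero]
    rw [dist_eq_norm] at hd
    set r : ℝ := ‖u' - u‖ with hr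
    have hr0 : 0 ≤ r := norm_nonneg _
    rcases eq_or_lt_of_le hr0 with h0 | hrpos
    · -- u' = u
      have : u' = u := by
        rw [← sub_eq_zero]
        exact norm_eq_zero.mp h0.symm
      rw [this, hGu]
      simp [norm_nonneg, mul_nonneg hε.le (norm_nonneg _)]
      exact mul_nonneg hε.le hr0
    · have hx' : |u' i0| ≤ r := by
        have := norm_le_pi_norm (u' - u) i0
        simpa [Real.norm_eq_abs, hx0] using this
      have hy' : |u' i1| ≤ r := by
        have := norm_le_pi_norm (u' - u) i1
        simpa [Real.norm_eq_abs, hy0] using this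
      have hrhalf : r < 1/2 := lt_of_lt_of_le hd (min_le_left _ _)
      have hrε : r < ε ^ q / 2 ^ q := lt_of_lt_of_le hd (min_le_right _ _)
      set E' : ℝ := (u' i0) ^ 2 + (u' i1) ^ (2 * q) with hE'
      have hE'0 : 0 ≤ E' := E_nonneg _ _ _
      have hx2 : (u' i0) ^ 2 ≤ r ^ 2 := by
        rw [← sq_abs]
        exact pow_le_pow_left₀ (abs_nonneg _) hx' 2
      have hy2 : (u' i1) ^ 2 ≤ r ^ 2 := by
        rw [← sq_abs]
        exact pow_le_pow_left₀ (abs_nonneg _) hy' 2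
      have hy2q : (u' i1) ^ (2 * q) ≤ (u' i1) ^ 2 := by
        rw [pow_mul]
        calc ((u' i1) ^ 2) ^ q ≤ ((u' i1) ^ 2) ^ 1 :=
              pow_le_pow_of_le_one (sq_nonneg _) (by nlinarith) hq
          _ = (u' i1) ^ 2 := pow_one _
      have hEr : E' ≤ 2 * r ^ 2 := by
        rw [hE']
        nlinarith
      have hE'1 : E' ≤ 1 := by nlinarith
      -- weight
      set w : ℕ := q * a + b - 2 * q * c with hwdef
      have hww : q * a + b = w + 2 * q * c := by omega
      have hw1 : q + 1 ≤ w := by omega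
      have key : |G i0 i1 q a b c u'| ^ (2 * q) ≤ 2 ^ (q + 1) * r ^ (2 * q) * r ^ 2 := by
        calc |G i0 i1 q a b c u'| ^ (2 * q) ≤ E' ^ w :=
              G_pow_le i0 i1 q a b c w hq (by omega) hww u'
          _ ≤ E' ^ (q + 1) := pow_le_pow_of_le_one hE'0 hE'1 hw1
          _ ≤ (2 * r ^ 2) ^ (q + 1) := pow_le_pow_left₀ hE'0 hEr _
          _ = 2 ^ (q + 1) * r ^ (2 * q) * r ^ 2 := by
              rw [mul_pow, ← pow_mul]
              ring
      have hgoal : |G i0 i1 q a b c u'| ≤ ε * r := by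
        apply le_of_pow_le_pow_left₀ (n := 2 * q) (by omega) (by positivity)
        calc |G i0 i1 q a b c u'| ^ (2 * q) ≤ 2 ^ (q + 1) * r ^ (2 * q) * r ^ 2 := key
          _ ≤ ε ^ (2 * q) * r ^ (2 * q) := by
              have h1 : 2 ^ (q + 1) * r ^ 2 ≤ ε ^ (2 * q) := by
                have hr2 : r ^ 2 ≤ (ε ^ q / 2 ^ q) ^ 2 := by
                  apply pow_le_pow_left₀ hr0 hrε.le
                calc 2 ^ (q + 1) * r ^ 2 ≤ 2 ^ (q + 1) * (ε ^ q / 2 ^ q) ^ 2 := by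
                      apply mul_le_mul_of_nonneg_left hr2 (by positivity)
                  _ = ε ^ (2 * q) * (2 ^ (q + 1) / (2 ^ q) ^ 2) := by
                      rw [div_pow, ← pow_mul]
                      ring
                  _ ≤ ε ^ (2 * q) * 1 := by
                      apply mul_le_mul_of_nonneg_left _ (by positivity)
                      rw [div_le_one (by positivity), ← pow_mul]
                      apply pow_le_pow_right₀ (by norm_num)
                      omega
                  _ = ε ^ (2 * q) := mul_one _
              calc 2 ^ (q + 1) * r ^ (2 * q) * r ^ 2
                  = (2 ^ (q + 1) * r ^ 2) * r ^ (2 * q) := by ring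
                _ ≤ ε ^ (2 * q) * r ^ (2 * q) :=
                    mul_le_mul_of_nonneg_right h1 (by positivity)
          _ = (ε * r) ^ (2 * q) := (mul_pow _ _ _).symm
      simpa [Real.norm_eq_abs, hr] using hgoal
  · -- regular point: quotient rule
    obtain ⟨c', rfl⟩ : ∃ c', c = c' + 1 := ⟨c - 1, by omega⟩
    obtain ⟨q', rfl⟩ : ∃ q', q = q' + 1 := ⟨q - 1, by omega⟩
    have hX : HasFDerivAt (fun u : Fin n → ℝ => u i0)
        (ContinuousLinearMap.proj (R := ℝ) (φ := fun _ : Fin n => ℝ) i0) u :=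
      (ContinuousLinearMap.proj (R := ℝ) (φ := fun _ : Fin n => ℝ) i0).hasFDerivAt
    have hY : HasFDerivAt (fun u : Fin n → ℝ => u i1)
        (ContinuousLinearMap.proj (R := ℝ) (φ := fun _ : Fin n => ℝ) i1) u :=
      (ContinuousLinearMap.proj (R := ℝ) (φ := fun _ : Fin n => ℝ) i1).hasFDerivAt
    have hxa : HasFDerivAt (fun u : Fin n → ℝ => (u i0) ^ a)
        (((a : ℝ) * (u i0) ^ (a - 1)) • ContinuousLinearMap.proj (R := ℝ) (φ := fun _ : Fin n => ℝ) i0) u :=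
      (hasDerivAt_pow a (u i0)).comp_hasFDerivAt u hX
    have hyb : HasFDerivAt (fun u : Fin n → ℝ => (u i1) ^ b)
        (((b : ℝ) * (u i1) ^ (b - 1)) • ContinuousLinearMap.proj (R := ℝ) (φ := fun _ : Fin n => ℝ) i1) u :=
      (hasDerivAt_pow b (u i1)).comp_hasFDerivAt u hY
    have hx2 : HasFDerivAt (fun u : Fin n → ℝ => (u i0) ^ 2)
        (((2 : ℝ) * (u i0) ^ 1) • ContinuousLinearMap.proj (R := ℝ) (φ := fun _ : Fin n => ℝ) i0) u := by
      have := (hasDerivAt_pow 2 (u i0)).comp_hasFDerivAt u hX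
      norm_num at this
      simpa [Function.comp_def] using this
    have hy2q : HasFDerivAt (fun u : Fin n → ℝ => (u i1) ^ (2 * (q'+1)))
        (((2 * (q'+1) : ℝ) * (u i1) ^ (2 * (q'+1) - 1)) • ContinuousLinearMap.proj (R := ℝ) (φ := fun _ : Fin n => ℝ) i1) u := by
      have := (hasDerivAt_pow (2 * (q'+1)) (u i1)).comp_hasFDerivAt u hY
      exact_mod_cast this
    have hEd := hx2.add hy2q
    have hdenne : ((u i0) ^ 2 + (u i1) ^ (2 * (q'+1))) ^ (c'+1) ≠ 0 := pow_ne_zero _ hE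
    have hinv : HasDerivAt (fun t : ℝ => (t ^ (c'+1))⁻¹)
        (-(((c'+1) : ℝ) * ((u i0) ^ 2 + (u i1) ^ (2 * (q'+1))) ^ ((c'+1) - 1)) /
          (((u i0) ^ 2 + (u i1) ^ (2 * (q'+1))) ^ (c'+1)) ^ 2) ((u i0) ^ 2 + (u i1) ^ (2 * (q'+1))) :=
      by exact_mod_cast HasDerivAt.inv (c := fun t : ℝ => t ^ (c'+1)) (hasDerivAt_pow (c'+1) _) hdenne
    have hinvE := hinv.comp_hasFDerivAt u hEd
    have htot := (hxa.mul hyb).mul hinvE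
    have hfun : G i0 i1 (q'+1) a b (c'+1) = fun u : Fin n → ℝ =>
        ((u i0) ^ a * (u i1) ^ b) * (((u i0) ^ 2 + (u i1) ^ (2 * (q'+1))) ^ (c'+1))⁻¹ := by
      funext v
      rw [G, div_eq_mul_inv]
    rw [hfun]
    refine htot.congr_fderiv ?_
    refine ContinuousLinearMap.ext fun v => ?_
    simp only [ContinuousLinearMap.add_apply, ContinuousLinearMap.smul_apply,
      ContinuousLinearMap.proj_apply, smul_eq_mul, G,
      Nat.add_sub_cancel, Pi.mul_apply, Pi.add_apply, Function.comp_apply]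
    rw [show 2 * (q' + 1) - 1 = 2 * q' + 1 from by omega,
      show b + 2 * (q' + 1) - 1 = b + (2 * q' + 1) from by omega,
      show c' + 1 + 1 = c' + 2 from by omega]
    field_simp
    push_cast
    ring

lemma contDiff_G (i0 i1 : Fin n) (m q a b c : ℕ) (hq : 1 ≤ q) (hc : 1 ≤ c)
    (h : m * q + 1 + 2 * q * c ≤ q * a + b) :
    ContDiff ℝ m (G i0 i1 q a b c) := by
  induction m generalizing a b c with
  | zero =>
    rw [show ((0 : ℕ) : WithTop ℕ∞) = 0 by norm_cast, contDiff_zero]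
    rw [continuous_iff_continuousAt]
    intro u
    by_cases hE : (u i0) ^ 2 + (u i1) ^ (2 * q) = 0
    · -- singular point
      have hGu : G i0 i1 q a b c u = 0 := by
        simp only [G, hE, zero_pow (by omega : c ≠ 0), div_zero]
      rw [Metric.continuousAt_iff]
      intro ε hε
      have hEc : ContinuousAt (fun u : Fin n → ℝ => (u i0) ^ 2 + (u i1) ^ (2 * q)) u := by
        fun_prop
      rw [Metric.continuousAt_iff] at hEc
      obtain ⟨δ, hδ, himp⟩ := hEc (min 1 (ε ^ (2 * q))) (by positivity)
      refine ⟨δ, hδ, fun {u'} hd => ?_⟩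
      have hEd := himp hd
      rw [Real.dist_eq, hE, sub_zero] at hEd
      have hE'0 : 0 ≤ (u' i0) ^ 2 + (u' i1) ^ (2 * q) := E_nonneg _ _ _
      have hE'lt : (u' i0) ^ 2 + (u' i1) ^ (2 * q) < min 1 (ε ^ (2 * q)) := by
        rwa [abs_of_nonneg hE'0] at hEd
      rw [Real.dist_eq, hGu, sub_zero]
      by_contra hcon
      push_neg at hcon
      have h1 : ε ^ (2 * q) ≤ |G i0 i1 q a b c u'| ^ (2 * q) :=
        pow_le_pow_left₀ hε.le hcon _
      set w : ℕ := q * a + b - 2 * q * c with hwdef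
      have hww : q * a + b = w + 2 * q * c := by omega
      have hw1 : 1 ≤ w := by omega
      have h2 : |G i0 i1 q a b c u'| ^ (2 * q) ≤ ((u' i0) ^ 2 + (u' i1) ^ (2 * q)) ^ w :=
        G_pow_le i0 i1 q a b c w hq hw1 hww u'
      have h3 : ((u' i0) ^ 2 + (u' i1) ^ (2 * q)) ^ w ≤ (u' i0) ^ 2 + (u' i1) ^ (2 * q) := by
        calc ((u' i0) ^ 2 + (u' i1) ^ (2 * q)) ^ w
            ≤ ((u' i0) ^ 2 + (u' i1) ^ (2 * q)) ^ 1 :=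
              pow_le_pow_of_le_one hE'0 (le_trans hE'lt.le (min_le_left _ _)) hw1
          _ = _ := pow_one _
      have h4 : (u' i0) ^ 2 + (u' i1) ^ (2 * q) < ε ^ (2 * q) :=
        lt_of_lt_of_le hE'lt (min_le_right _ _)
      linarith
    · -- regular point
      have h1 : ContinuousAt (fun u : Fin n → ℝ => (u i0) ^ a * (u i1) ^ b) u := by fun_prop
      have h2 : ContinuousAt (fun u : Fin n → ℝ => ((u i0) ^ 2 + (u i1) ^ (2 * q)) ^ c) u := by
        fun_prop
      exact h1.div h2 (pow_ne_zero _ hE)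
  | succ m IH =>
    have hder : ∀ u : Fin n → ℝ, HasFDerivAt (G i0 i1 q a b c)
        ((((a : ℝ) * G i0 i1 q (a - 1) b c u - (2 * c : ℝ) * G i0 i1 q (a + 1) b (c + 1) u) •
            ContinuousLinearMap.proj (R := ℝ) (φ := fun _ : Fin n => ℝ) i0)
          + (((b : ℝ) * G i0 i1 q a (b - 1) c u -
              (2 * q * c : ℝ) * G i0 i1 q a (b + 2 * q - 1) (c + 1) u) •
            ContinuousLinearMap.proj (R := ℝ) (φ := fun _ : Fin n => ℝ) i1)) u := by
      intro u
      apply G_hasFDerivAt i0 i1 q a b c hq hc _ u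
      have : q ≤ (m + 1) * q := by nlinarith
      linarith [h, Nat.succ_mul m q]
    have hfd : fderiv ℝ (G i0 i1 q a b c) = fun u =>
        (((a : ℝ) * G i0 i1 q (a - 1) b c u - (2 * c : ℝ) * G i0 i1 q (a + 1) b (c + 1) u) •
            ContinuousLinearMap.proj (R := ℝ) (φ := fun _ : Fin n => ℝ) i0)
          + (((b : ℝ) * G i0 i1 q a (b - 1) c u -
              (2 * q * c : ℝ) * G i0 i1 q a (b + 2 * q - 1) (c + 1) u) •
            ContinuousLinearMap.proj (R := ℝ) (φ := fun _ : Fin n => ℝ) i1) :=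
      funext fun u => (hder u).fderiv
    have hm1 : ((m + 1 : ℕ) : WithTop ℕ∞) = (m : WithTop ℕ∞) + 1 := by norm_cast
    rw [hm1, contDiff_succ_iff_fderiv]
    refine ⟨fun u => (hder u).differentiableAt, ?_, ?_⟩
    · intro hω
      exact absurd hω (by simp)
    · rw [hfd]
      have hsm : m * q + q = (m + 1) * q := by ring
      have c1 : ContDiff ℝ m (G i0 i1 q (a - 1) b c) := by
        apply IH _ _ _ hc
        rcases Nat.eq_zero_or_pos a with ha | ha
        · subst ha
          simp only [Nat.zero_sub, Nat.mul_zero, Nat.zero_add] at h ⊢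
          rw [Nat.succ_mul m q] at h
          linarith
        · obtain ⟨a', rfl⟩ : ∃ a', a = a' + 1 := ⟨a - 1, by omega⟩
          simp only [Nat.add_sub_cancel]
          have h' := h
          rw [Nat.succ_mul m q, Nat.mul_add q a' 1, Nat.mul_one] at h'
          linarith
      have c2 : ContDiff ℝ m (G i0 i1 q (a + 1) b (c + 1)) := by
        apply IH _ _ _ (by omega)
        rw [Nat.mul_add q a 1, Nat.mul_add (2*q) c 1, Nat.mul_one, Nat.mul_one]
        rw [Nat.succ_mul m q] at h
        linarith
      have c3 : ContDiff ℝ m (G i0 i1 q a (b - 1) c) := by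
        apply IH _ _ _ hc
        rcases Nat.eq_zero_or_pos b with hb | hb
        · subst hb
          simp only [Nat.zero_sub, Nat.add_zero] at h ⊢
          rw [Nat.succ_mul m q] at h
          linarith
        · obtain ⟨b', rfl⟩ : ∃ b', b = b' + 1 := ⟨b - 1, by omega⟩
          simp only [Nat.add_sub_cancel]
          rw [Nat.succ_mul m q] at h
          linarith
      have c4 : ContDiff ℝ m (G i0 i1 q a (b + 2 * q - 1) (c + 1)) := by
        apply IH _ _ _ (by omega)
        have e1 : b + 2 * q - 1 = b + (2 * q - 1) := by omega
        have e2 : 2 * q - 1 + 1 = 2 * q := by omega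
        rw [e1, Nat.mul_add (2*q) c 1, Nat.mul_one]
        rw [Nat.succ_mul m q] at h
        omega
      exact (((contDiff_const.mul c1).sub (contDiff_const.mul c2)).smul contDiff_const).add
        (((contDiff_const.mul c3).sub (contDiff_const.mul c4)).smul contDiff_const)

lemma mem_regulousRing_iff {k : ℕ} {f : (Fin n → ℝ) → ℝ} :
    f ∈ regulousRing n k ↔ IsRegulous n k f := Iff.rfl

/-- the `j`-th generator: `x^{2(k+1)} y^{k(j+1)+1} / (x² + y^{2(j+1)})^{k+1}` -/
noncomputable def FF (i0 i1 : Fin n) (k j : ℕ) : (Fin n → ℝ) → ℝ :=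
  G i0 i1 (j + 1) (2 * (k + 1)) (k * (j + 1) + 1) (k + 1)

lemma contDiff_FF (i0 i1 : Fin n) (k j : ℕ) : ContDiff ℝ k (FF i0 i1 k j) := by
  apply contDiff_G i0 i1 k (j + 1) _ _ (k + 1) (by omega) (by omega)
  apply Nat.le_of_eq
  ring

lemma isRegulous_FF (i0 i1 : Fin n) (k j : ℕ) : IsRegulous n k (FF i0 i1 k j) := by
  refine ⟨contDiff_FF i0 i1 k j,
    (X i0) ^ (2 * (k + 1)) * (X i1) ^ (k * (j + 1) + 1),
    ((X i0) ^ 2 + (X i1) ^ (2 * (j + 1))) ^ (k + 1), ?_, ?_⟩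
  · intro hcon
    have := congrArg (eval (fun _ => (1 : ℝ))) hcon
    simp only [eval_pow, eval_add, eval_X, map_zero, one_pow] at this
    norm_num at this
  · intro x
    simp only [eval_pow, eval_add, eval_mul, eval_X, FF, G]
    by_cases hE : (x i0) ^ 2 + (x i1) ^ (2 * (j + 1)) = 0
    · obtain ⟨hx0, _⟩ := E_eq_zero (by omega) hE
      rw [hE, hx0]
      rw [zero_pow (by omega : k + 1 ≠ 0), zero_mul,
        zero_pow (by omega : 2 * (k + 1) ≠ 0), zero_mul]
    · field_simp


/-- the test curve `t ↦ (t^σ, t, 0, …, 0)` -/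
noncomputable def crv (i0 i1 : Fin n) (σ : ℕ) : ℝ → (Fin n → ℝ) :=
  fun t i => if i = i0 then t ^ σ else if i = i1 then t else 0

lemma crv_cont (i0 i1 : Fin n) (σ : ℕ) : Continuous (crv i0 i1 σ) := by
  apply continuous_pi
  intro i
  unfold crv
  split_ifs <;> fun_prop

lemma crv_i0 (i0 i1 : Fin n) (σ : ℕ) (t : ℝ) : crv i0 i1 σ t i0 = t ^ σ := if_pos rfl

lemma crv_i1 (i0 i1 : Fin n) (σ : ℕ) (hne : i1 ≠ i0) (t : ℝ) : crv i0 i1 σ t i1 = t := by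
  unfold crv
  rw [if_neg hne, if_pos rfl]

lemma G_crv (i0 i1 : Fin n) (hne : i1 ≠ i0) (q a b c σ : ℕ) (t : ℝ) :
    G i0 i1 q a b c (crv i0 i1 σ t) =
      ((t ^ σ) ^ a * t ^ b) / ((t ^ σ) ^ 2 + t ^ (2 * q)) ^ c := by
  simp only [G, crv_i0, crv_i1 i0 i1 σ hne]

/-- Upper bound for generators with small `q` along the curve. -/
lemma FF_crv_le (i0 i1 : Fin n) (hne : i1 ≠ i0) (k j i : ℕ) (hj : j ≤ i) (t : ℝ)
    (ht0 : 0 < t) (ht1 : t ≤ 1) :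
    |FF i0 i1 k j (crv i0 i1 (i + 2) t)| ≤ t ^ (k * (i + 2) + 3) := by
  set σ := i + 2 with hσ
  set q := j + 1 with hq
  set a := 2 * (k + 1) with ha
  set b := k * (j + 1) + 1 with hb
  rw [FF, G_crv i0 i1 hne]
  have hden_pos : (0:ℝ) < ((t ^ σ) ^ 2 + t ^ (2 * q)) ^ (k + 1) := by positivity
  have habs : |((t ^ σ) ^ a * t ^ b) / ((t ^ σ) ^ 2 + t ^ (2 * q)) ^ (k + 1)|
      = ((t ^ σ) ^ a * t ^ b) / ((t ^ σ) ^ 2 + t ^ (2 * q)) ^ (k + 1) := by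
    apply abs_of_nonneg
    positivity
  rw [habs]
  have hdlow : (t ^ (2 * q)) ^ (k + 1) ≤ ((t ^ σ) ^ 2 + t ^ (2 * q)) ^ (k + 1) := by
    apply pow_le_pow_left₀ (by positivity)
    nlinarith [sq_nonneg (t ^ σ)]
  calc ((t ^ σ) ^ a * t ^ b) / ((t ^ σ) ^ 2 + t ^ (2 * q)) ^ (k + 1)
      ≤ ((t ^ σ) ^ a * t ^ b) / (t ^ (2 * q)) ^ (k + 1) := by
        apply div_le_div_of_nonneg_left (by positivity) (by positivity) hdlow
    _ = t ^ (σ * a + b) / t ^ (2 * q * (k + 1)) := by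
        rw [← pow_mul, ← pow_mul, ← pow_add]
    _ ≤ t ^ (k * σ + 3) := by
        rw [div_le_iff₀ (by positivity), ← pow_add]
        apply pow_le_pow_of_le_one ht0.le ht1
        simp only [hσ, hq, ha, hb]
        nlinarith [hj, Nat.mul_le_mul_left k hj]

/-- Exact value of the new generator along the curve. -/
lemma FF_crv_eq (i0 i1 : Fin n) (hne : i1 ≠ i0) (k i : ℕ) (t : ℝ) (ht0 : 0 < t) :
    FF i0 i1 k (i + 1) (crv i0 i1 (i + 2) t) =
      t ^ (k * (i + 2) + 1) / 2 ^ (k + 1) := by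
  set σ := i + 2 with hσ
  rw [FF, G_crv i0 i1 hne]
  have h1 : (t ^ σ) ^ 2 + t ^ (2 * (i + 1 + 1)) = 2 * t ^ (2 * σ) := by
    rw [← pow_mul, hσ]
    ring_nf
  rw [h1]
  have ht : t ≠ 0 := ht0.ne'
  rw [mul_pow, ← pow_mul, ← pow_mul]
  rw [div_eq_div_iff (by positivity) (by positivity)]
  rw [← pow_add]
  rw [hσ]
  ring_nf

end RegNoeth

open RegNoeth

/-- **Regulous functions, Proposition (non-noethérianité)**: for `n ≥ 2` the ring
`R^k(ℝⁿ)` of `k`-regulous functions on `ℝⁿ` is not Noetherian; in particular it carries a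
strictly increasing sequence of ideals. -/
theorem regulousRing_not_noetherian (n k : ℕ) (hn : 2 ≤ n) :
    ¬ IsNoetherianRing (regulousRing n k) ∧
      ∃ I : ℕ → Ideal (regulousRing n k), ∀ i : ℕ, I i < I (i + 1) := by
  have h0 : 0 < n := by omega
  have h1 : 1 < n := by omega
  set i0 : Fin n := ⟨0, h0⟩
  set i1 : Fin n := ⟨1, h1⟩
  have hne : i1 ≠ i0 := by
    simp [i0, i1, Fin.ext_iff]
  -- the generators as elements of the ring
  set R := regulousRing n k with hR
  let FR : ℕ → R := fun j => ⟨FF i0 i1 k j, mem_regulousRing_iff.mpr (isRegulous_FF i0 i1 k j)⟩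
  let I : ℕ → Ideal R := fun i => Ideal.span (FR '' Set.Iic i)
  -- the key analytic fact
  have key : ∀ i : ℕ, FR (i + 1) ∉ I i := by
    intro i hmem
    set σ := i + 2 with hσ
    -- every element of `I i` is dominated by `t ^ (kσ+3)` along the curve
    have hdom : ∀ (g : R), g ∈ I i → ∃ M : ℝ, 0 ≤ M ∧ ∀ t : ℝ, 0 < t → t ≤ 1 →
        |(g : (Fin n → ℝ) → ℝ) (crv i0 i1 σ t)| ≤ M * t ^ (k * σ + 3) := by
      intro g hg
      induction hg using Submodule.span_induction with
      | mem x hx =>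
        obtain ⟨j, hj, rfl⟩ := hx
        refine ⟨1, zero_le_one, fun t ht0 ht1 => ?_⟩
        rw [one_mul]
        exact FF_crv_le i0 i1 hne k j i hj t ht0 ht1
      | zero =>
        exact ⟨0, le_refl _, fun t ht0 ht1 => by simp⟩
      | add x y hx hy ihx ihy =>
        obtain ⟨M1, hM1, h1⟩ := ihx
        obtain ⟨M2, hM2, h2⟩ := ihy
        refine ⟨M1 + M2, by linarith, fun t ht0 ht1 => ?_⟩
        calc |((x + y : R) : (Fin n → ℝ) → ℝ) (crv i0 i1 σ t)|
            = |(x : (Fin n → ℝ) → ℝ) (crv i0 i1 σ t) + (y : (Fin n → ℝ) → ℝ) (crv i0 i1 σ t)| := by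
              norm_cast
          _ ≤ |(x : (Fin n → ℝ) → ℝ) (crv i0 i1 σ t)| + |(y : (Fin n → ℝ) → ℝ) (crv i0 i1 σ t)| :=
              abs_add_le _ _
          _ ≤ M1 * t ^ (k * σ + 3) + M2 * t ^ (k * σ + 3) := by
              gcongr
              · exact h1 t ht0 ht1
              · exact h2 t ht0 ht1
          _ = (M1 + M2) * t ^ (k * σ + 3) := by ring
      | smul a x hx ihx =>
        obtain ⟨M, hM, hb⟩ := ihx
        -- bound the continuous function `a` along the compact curve
        have hacont : ContinuousOn (fun t : ℝ => (a : (Fin n → ℝ) → ℝ) (crv i0 i1 σ t))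
            (Set.Icc (0:ℝ) 1) := by
          apply Continuous.continuousOn
          exact ((mem_regulousRing_iff.mp a.2).1.continuous).comp (crv_cont i0 i1 σ)
        obtain ⟨C, hC⟩ := isCompact_Icc.exists_bound_of_continuousOn hacont
        refine ⟨max C 0 * M, mul_nonneg (le_max_right _ _) hM, fun t ht0 ht1 => ?_⟩
        have hval : ((a • x : R) : (Fin n → ℝ) → ℝ) (crv i0 i1 σ t)
            = (a : (Fin n → ℝ) → ℝ) (crv i0 i1 σ t) * (x : (Fin n → ℝ) → ℝ) (crv i0 i1 σ t) := by
          rw [smul_eq_mul]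
          norm_cast
        rw [hval, abs_mul]
        have ha1 : |(a : (Fin n → ℝ) → ℝ) (crv i0 i1 σ t)| ≤ max C 0 := by
          refine le_trans ?_ (le_max_left _ _)
          have := hC t ⟨ht0.le, ht1⟩
          rwa [Real.norm_eq_abs] at this
        calc |(a : (Fin n → ℝ) → ℝ) (crv i0 i1 σ t)| * |(x : (Fin n → ℝ) → ℝ) (crv i0 i1 σ t)|
            ≤ max C 0 * (M * t ^ (k * σ + 3)) := by
              apply mul_le_mul ha1 (hb t ht0 ht1) (abs_nonneg _)
              exact le_max_right _ _
          _ = max C 0 * M * t ^ (k * σ + 3) := by ring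
    obtain ⟨M, hM, hbound⟩ := hdom _ hmem
    -- contradiction at small t
    have hval : ∀ t : ℝ, 0 < t → t ≤ 1 →
        t ^ (k * σ + 1) / 2 ^ (k + 1) ≤ M * t ^ (k * σ + 3) := by
      intro t ht0 ht1
      have := hbound t ht0 ht1
      have heq : (FR (i + 1) : (Fin n → ℝ) → ℝ) (crv i0 i1 σ t)
          = t ^ (k * σ + 1) / 2 ^ (k + 1) := FF_crv_eq i0 i1 hne k i t ht0
      rw [heq] at this
      calc t ^ (k * σ + 1) / 2 ^ (k + 1)
          = |t ^ (k * σ + 1) / 2 ^ (k + 1)| := (abs_of_nonneg (by positivity)).symm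
        _ ≤ M * t ^ (k * σ + 3) := this
    -- pick t small enough
    set t₀ : ℝ := min 1 (1 / (2 ^ (k + 1) * (M + 1))) with ht₀
    have ht₀0 : 0 < t₀ := by positivity
    have ht₀1 : t₀ ≤ 1 := min_le_left _ _
    have h := hval t₀ ht₀0 ht₀1
    have hsplit : t₀ ^ (k * σ + 3) = t₀ ^ (k * σ + 1) * t₀ ^ 2 := by
      rw [← pow_add]
    rw [hsplit] at h
    have hpos : (0:ℝ) < t₀ ^ (k * σ + 1) := by positivity
    have h2 : 1 / 2 ^ (k + 1) ≤ M * t₀ ^ 2 := by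
      have h' : t₀ ^ (k * σ + 1) * (1 / 2 ^ (k + 1)) ≤ t₀ ^ (k * σ + 1) * (M * t₀ ^ 2) := by
        calc t₀ ^ (k * σ + 1) * (1 / 2 ^ (k + 1)) = t₀ ^ (k * σ + 1) / 2 ^ (k + 1) := by ring
          _ ≤ M * (t₀ ^ (k * σ + 1) * t₀ ^ 2) := h
          _ = t₀ ^ (k * σ + 1) * (M * t₀ ^ 2) := by ring
      exact le_of_mul_le_mul_left h' hpos
    have ht₀small : t₀ ≤ 1 / (2 ^ (k + 1) * (M + 1)) := min_le_right _ _
    have hcon : M * t₀ ^ 2 < 1 / 2 ^ (k + 1) := by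
      have h2k : (0:ℝ) < 2 ^ (k + 1) := by positivity
      have hM1 : (0:ℝ) < M + 1 := by linarith
      have ht₀sq : t₀ ^ 2 ≤ t₀ := by nlinarith [ht₀0, ht₀1]
      calc M * t₀ ^ 2 ≤ M * t₀ := mul_le_mul_of_nonneg_left ht₀sq hM
        _ ≤ M * (1 / (2 ^ (k + 1) * (M + 1))) := by
            apply mul_le_mul_of_nonneg_left ht₀small hM
        _ = M / (M + 1) * (1 / 2 ^ (k + 1)) := by
            rw [div_mul_div_comm, mul_comm]
            ring_nf
        _ < 1 * (1 / 2 ^ (k + 1)) := by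
            apply mul_lt_mul_of_pos_right _ (by positivity)
            rw [div_lt_one hM1]
            linarith
        _ = 1 / 2 ^ (k + 1) := one_mul _
    linarith
  -- the chain is strictly increasing
  have hmono : ∀ i : ℕ, I i ≤ I (i + 1) := by
    intro i
    apply Ideal.span_mono
    apply Set.image_mono
    exact Set.Iic_subset_Iic.mpr (by omega)
  have hlt : ∀ i : ℕ, I i < I (i + 1) := by
    intro i
    apply lt_of_le_of_ne (hmono i)
    intro hEq
    apply key i
    rw [hEq]
    exact Ideal.subset_span ⟨i + 1, Set.mem_Iic.mpr le_rfl, rfl⟩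
  refine ⟨?_, I, hlt⟩
  intro hNoeth
  have : IsNoetherian R R := isNoetherianRing_iff.mp hNoeth
  obtain ⟨m, hm⟩ := monotone_stabilizes_iff_noetherian.mpr this
    ⟨I, monotone_nat_of_le_succ hmono⟩
  exact (hlt m).ne (hm (m + 1) (Nat.le_succ m))
end
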